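/- When the network is a path, for a sequence of rational swaps under strict preferences and objects o_a, o_b with a < b, letting a' and b' be the final positions of o_a and o_b respectively: if a' ≤ a or b' ≥ b, then a' < b'. (I.e., if o_a moves weakly leftward or o_b moves weakly rightward, their relative order is preserved.) -/

import Mathlib

/-- An assignment maps agents to objects bijectively (agents and objects are both `Fin n`;
object `o_i` is identified with index `i`, agent `i` initially holds `o_i`). -/
abbrev Assignment (n : ℕ) := Equiv.Perm (Fin n)

/-- `u j o` is agent `j`'s utility for object `o`; strict linear preferences mean each `u j`
is injective, and `o ≻_j o'` iff `u j o > u j o'`. -/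
def StrictPref {n : ℕ} (u : Fin n → Fin n → ℕ) : Prop := ∀ j, Function.Injective (u j)

/-- A rational swap under strict preferences: two adjacent agents exchange objects, each
strictly preferring the object received. -/
def SwapStep {n : ℕ} (adj : Fin n → Fin n → Prop) (u : Fin n → Fin n → ℕ)
    (σ σ' : Assignment n) : Prop :=
  ∃ a b : Fin n, adj a b ∧ u a (σ b) > u a (σ a) ∧ u b (σ a) > u b (σ b) ∧
    σ' = σ * Equiv.swap a b

/-- `σseq 0, σseq 1, …, σseq t` is a sequence of swaps. -/
def SwapSeq {n : ℕ} (adj : Fin n → Fin n → Prop) (u : Fin n → Fin n → ℕ)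
    (σseq : ℕ → Assignment n) (t : ℕ) : Prop :=
  ∀ m < t, SwapStep adj u (σseq m) (σseq (m + 1))

/-- Adjacency of the path `0 – 1 – ⋯ – (n-1)`. -/
def pathAdj {n : ℕ} (i j : Fin n) : Prop := i.val + 1 = j.val ∨ j.val + 1 = i.val

namespace RelOrderAux

variable {n : ℕ}

/-- Normalized structure of a swap step: the swapped agents `c < d` with `d = c+1`. -/
lemma step_struct {u : Fin n → Fin n → ℕ} {σ σ' : Assignment n}
    (hs : SwapStep pathAdj u σ σ') :
    ∃ c d : Fin n, c.val + 1 = d.val ∧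
      (∀ o : Fin n, σ'⁻¹ o = Equiv.swap c d (σ⁻¹ o)) ∧
      (∀ j : Fin n, σ' j = σ (Equiv.swap c d j)) := by
  obtain ⟨x, y, hadj, _h1, _h2, heq⟩ := hs
  have hinv : ∀ o, σ'⁻¹ o = Equiv.swap x y (σ⁻¹ o) := by
    intro o
    rw [heq, mul_inv_rev, Equiv.Perm.mul_apply, Equiv.swap_inv]
  have happ : ∀ j, σ' j = σ (Equiv.swap x y j) := by
    intro j; rw [heq, Equiv.Perm.mul_apply]
  cases hadj with
  | inl hxy => exact ⟨x, y, hxy, hinv, happ⟩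
  | inr hyx =>
      refine ⟨y, x, hyx, ?_, ?_⟩
      · intro o; rw [hinv o, Equiv.swap_comm]
      · intro j; rw [happ j, Equiv.swap_comm]

/-- One-step monotonicity of an agent's utility. -/
lemma util_step {u : Fin n → Fin n → ℕ} {σ σ' : Assignment n}
    (hs : SwapStep pathAdj u σ σ') (j : Fin n) :
    u j (σ j) ≤ u j (σ' j) := by
  obtain ⟨x, y, _hadj, h1, h2, heq⟩ := hs
  have happ : σ' j = σ (Equiv.swap x y j) := by rw [heq, Equiv.Perm.mul_apply]
  by_cases hjx : j = x
  · subst hjx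
    rw [happ, Equiv.swap_apply_left]
    exact le_of_lt h1
  · by_cases hjy : j = y
    · subst hjy
      rw [happ, Equiv.swap_apply_right]
      exact le_of_lt h2
    · rw [happ, Equiv.swap_apply_of_ne_of_ne hjx hjy]

/-- Utilities are monotone along the sequence. -/
lemma util_mono {u : Fin n → Fin n → ℕ} {σseq : ℕ → Assignment n} {t : ℕ}
    (hseq : SwapSeq pathAdj u σseq t) (j : Fin n) :
    ∀ m m', m ≤ m' → m' ≤ t → u j (σseq m j) ≤ u j (σseq m' j) := by
  intro m m' hmm' hm't
  induction m' , hmm' using Nat.le_induction with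
  | base => exact le_refl _
  | succ k hk ih =>
      exact le_trans (ih (by omega)) (util_step (hseq k (by omega)) j)

/-- No revisit: if an agent holds the same object at times `m ≤ m''`, it holds it at every
intermediate time. -/
lemma no_revisit {u : Fin n → Fin n → ℕ} {σseq : ℕ → Assignment n} {t : ℕ}
    (hu : StrictPref u) (hseq : SwapSeq pathAdj u σseq t) {j : Fin n}
    {m m' m'' : ℕ} (h1 : m ≤ m') (h2 : m' ≤ m'') (h3 : m'' ≤ t)
    (he : σseq m'' j = σseq m j) : σseq m' j = σseq m j := by
  have a1 := util_mono hseq j m m' h1 (le_trans h2 h3)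
  have a2 := util_mono hseq j m' m'' h2 h3
  rw [he] at a2
  exact hu j (le_antisymm a2 a1)

/-- Position form of no-revisit. -/
lemma pos_no_revisit {u : Fin n → Fin n → ℕ} {σseq : ℕ → Assignment n} {t : ℕ}
    (hu : StrictPref u) (hseq : SwapSeq pathAdj u σseq t) {o : Fin n}
    {m m' m'' : ℕ} (h1 : m ≤ m') (h2 : m' ≤ m'') (h3 : m'' ≤ t)
    (he : (σseq m'')⁻¹ o = (σseq m)⁻¹ o) : (σseq m')⁻¹ o = (σseq m)⁻¹ o := by
  set j := (σseq m)⁻¹ o with hj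
  have hmj : σseq m j = o := by rw [hj]; exact Equiv.apply_symm_apply _ _
  have hm''j : σseq m'' j = o := by
    have : σseq m'' ((σseq m'')⁻¹ o) = o := Equiv.apply_symm_apply (σseq m'') o
    rw [he] at this; exact this
  have := no_revisit hu hseq h1 h2 h3 (j := j) (by rw [hm''j, hmj])
  rw [hmj] at this
  rw [← this]
  exact (Equiv.symm_apply_apply _ _)

/-- The position of an object changes by at most one per step (given the swap is between
adjacent agents `c, d` with `c.val + 1 = d.val`). -/
lemma swap_val_bound {c d p : Fin n} (hcd : c.val + 1 = d.val) :
    (Equiv.swap c d p).val ≤ p.val + 1 ∧ p.val ≤ (Equiv.swap c d p).val + 1 := by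
  by_cases hpc : p = c
  · subst hpc; rw [Equiv.swap_apply_left]; omega
  · by_cases hpd : p = d
    · subst hpd; rw [Equiv.swap_apply_right]; omega
    · rw [Equiv.swap_apply_of_ne_of_ne hpc hpd]; omega

/-- If object `o` moves right at step `s`, then its final position is strictly right of its
position at time `s`, and its initial position is weakly left of it. -/
lemma right_move {u : Fin n → Fin n → ℕ} {σseq : ℕ → Assignment n} {t : ℕ}
    (hu : StrictPref u) (hseq : SwapSeq pathAdj u σseq t) {o : Fin n} {s : ℕ} (hs : s < t)
    (hmv : (((σseq (s+1))⁻¹) o).val = (((σseq s)⁻¹) o).val + 1) :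
    (((σseq 0)⁻¹) o).val ≤ (((σseq s)⁻¹) o).val ∧
    (((σseq s)⁻¹) o).val < (((σseq t)⁻¹) o).val := by
  set p := (σseq s)⁻¹ o with hp
  -- the object never returns to p after time s+1
  have hnotp : ∀ m, s + 1 ≤ m → m ≤ t → (σseq m)⁻¹ o ≠ p := by
    intro m h1 h2 hcon
    have := pos_no_revisit hu hseq (m := s) (m' := s+1) (m'' := m)
      (by omega) h1 h2 (by rw [hcon])
    rw [this] at hmv; omega
  -- forward: strictly right of p forever after
  have hfwd : ∀ m, s + 1 ≤ m → m ≤ t → p.val < (((σseq m)⁻¹) o).val := by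
    intro m h1 h2
    induction m, h1 using Nat.le_induction with
    | base => omega
    | succ k hk ih =>
        have hkt : k < t := by omega
        have ihv := ih (by omega)
        obtain ⟨c, d, hcd, hswap, _⟩ := step_struct (hseq k hkt)
        have hb := swap_val_bound (p := (σseq k)⁻¹ o) hcd
        rw [← hswap o] at hb
        have hne := hnotp (k+1) (by omega) h2
        have : (((σseq (k+1))⁻¹) o).val ≠ p.val := fun hv => hne (Fin.ext hv)
        omega
  -- backward: never at p+1 before time s+1
  have hnotq : ∀ m, m ≤ s → (σseq m)⁻¹ o ≠ (σseq (s+1))⁻¹ o := by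
    intro m h1 hcon
    have := pos_no_revisit hu hseq (m := m) (m' := s) (m'' := s+1)
      h1 (by omega) (by omega) (by rw [hcon])
    have h2 : p = (σseq (s+1))⁻¹ o := by rw [hp, this, hcon]
    rw [h2] at hmv; omega
  -- backward: weakly left of p at all times before s
  have hbwd : ∀ k, k ≤ s → (((σseq (s - k))⁻¹) o).val ≤ p.val := by
    intro k
    induction k with
    | zero => intro _; simp [hp]
    | succ k ih =>
        intro hk1
        have ihv := ih (by omega)
        set m := s - (k+1) with hm
        have hm1 : m + 1 = s - k := by omega
        have hmt : m < t := by omega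
        obtain ⟨c, d, hcd, hswap, _⟩ := step_struct (hseq m hmt)
        have hb := swap_val_bound (p := (σseq m)⁻¹ o) hcd
        rw [← hswap o, hm1] at hb
        have hne := hnotq m (by omega)
        have hne' : (((σseq m)⁻¹) o).val ≠ (((σseq (s+1))⁻¹) o).val :=
          fun hv => hne (Fin.ext hv)
        omega
  constructor
  · have := hbwd s le_rfl
    simpa using this
  · exact hfwd t (by omega) le_rfl

/-- If object `o` moves left at step `s`, then its final position is strictly left of its
position at time `s`, and its initial position is weakly right of it. -/
lemma left_move {u : Fin n → Fin n → ℕ} {σseq : ℕ → Assignment n} {t : ℕ}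
    (hu : StrictPref u) (hseq : SwapSeq pathAdj u σseq t) {o : Fin n} {s : ℕ} (hs : s < t)
    (hmv : (((σseq (s+1))⁻¹) o).val + 1 = (((σseq s)⁻¹) o).val) :
    (((σseq s)⁻¹) o).val ≤ (((σseq 0)⁻¹) o).val ∧
    (((σseq t)⁻¹) o).val < (((σseq s)⁻¹) o).val := by
  set p := (σseq s)⁻¹ o with hp
  have hnotp : ∀ m, s + 1 ≤ m → m ≤ t → (σseq m)⁻¹ o ≠ p := by
    intro m h1 h2 hcon
    have := pos_no_revisit hu hseq (m := s) (m' := s+1) (m'' := m)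
      (by omega) h1 h2 (by rw [hcon])
    rw [this] at hmv; omega
  have hfwd : ∀ m, s + 1 ≤ m → m ≤ t → (((σseq m)⁻¹) o).val < p.val := by
    intro m h1 h2
    induction m, h1 using Nat.le_induction with
    | base => omega
    | succ k hk ih =>
        have hkt : k < t := by omega
        have ihv := ih (by omega)
        obtain ⟨c, d, hcd, hswap, _⟩ := step_struct (hseq k hkt)
        have hb := swap_val_bound (p := (σseq k)⁻¹ o) hcd
        rw [← hswap o] at hb
        have hne := hnotp (k+1) (by omega) h2
        have : (((σseq (k+1))⁻¹) o).val ≠ p.val := fun hv => hne (Fin.ext hv)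
        omega
  have hnotq : ∀ m, m ≤ s → (σseq m)⁻¹ o ≠ (σseq (s+1))⁻¹ o := by
    intro m h1 hcon
    have := pos_no_revisit hu hseq (m := m) (m' := s) (m'' := s+1)
      h1 (by omega) (by omega) (by rw [hcon])
    have h2 : p = (σseq (s+1))⁻¹ o := by rw [hp, this, hcon]
    rw [h2] at hmv; omega
  have hbwd : ∀ k, k ≤ s → p.val ≤ (((σseq (s - k))⁻¹) o).val := by
    intro k
    induction k with
    | zero => intro _; simp [hp]
    | succ k ih =>
        intro hk1
        have ihv := ih (by omega)
        set m := s - (k+1) with hm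
        have hm1 : m + 1 = s - k := by omega
        have hmt : m < t := by omega
        obtain ⟨c, d, hcd, hswap, _⟩ := step_struct (hseq m hmt)
        have hb := swap_val_bound (p := (σseq m)⁻¹ o) hcd
        rw [← hswap o, hm1] at hb
        have hne := hnotq m (by omega)
        have hne' : (((σseq m)⁻¹) o).val ≠ (((σseq (s+1))⁻¹) o).val :=
          fun hv => hne (Fin.ext hv)
        omega
  constructor
  · have := hbwd s le_rfl
    simpa using this
  · exact hfwd t (by omega) le_rfl

end RelOrderAux

open RelOrderAux in
/-- on a path, for objects `o_a` and `o_b` with `a < b` and final positions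
`a' = σ_t⁻¹(o_a)`, `b' = σ_t⁻¹(o_b)`: if `a' ≤ a` or `b' ≥ b` then `a' < b'`. -/
theorem relative_order_preserved {n : ℕ}
    (u : Fin n → Fin n → ℕ) (hu : StrictPref u)
    (t : ℕ) (σseq : ℕ → Assignment n) (h0 : σseq 0 = 1)
    (hseq : SwapSeq pathAdj u σseq t)
    (a b : Fin n) (hab : a.val < b.val)
    (h : (((σseq t)⁻¹) a).val ≤ a.val ∨ b.val ≤ (((σseq t)⁻¹) b).val) :
    (((σseq t)⁻¹) a).val < (((σseq t)⁻¹) b).val := by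
  by_contra hcon
  push_neg at hcon
  have hab' : a ≠ b := fun he => by rw [he] at hab; omega
  have hne : ∀ k, (σseq k)⁻¹ a ≠ (σseq k)⁻¹ b :=
    fun k hh => hab' ((σseq k)⁻¹.injective hh)
  have h0a : (σseq 0)⁻¹ a = a := by rw [h0]; rfl
  have h0b : (σseq 0)⁻¹ b = b := by rw [h0]; rfl
  -- find the first step where the order flips
  have hflip : ∃ m, m < t ∧ (((σseq m)⁻¹ a).val < ((σseq m)⁻¹ b).val) ∧
      ¬ (((σseq (m+1))⁻¹ a).val < ((σseq (m+1))⁻¹ b).val) := by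
    by_contra hno
    push_neg at hno
    have hall : ∀ m, m ≤ t → ((σseq m)⁻¹ a).val < ((σseq m)⁻¹ b).val := by
      intro m
      induction m with
      | zero => intro _; rw [h0a, h0b]; exact hab
      | succ k ih =>
          intro hk
          exact hno k (by omega) (ih (by omega))
    have := hall t le_rfl
    omega
  obtain ⟨m, hmt, hPm, hPm1⟩ := hflip
  obtain ⟨c, d, hcd, hswap, _⟩ := step_struct (hseq m hmt)
  set pa := (σseq m)⁻¹ a with hpa
  set pb := (σseq m)⁻¹ b with hpb
  have hswa : (σseq (m+1))⁻¹ a = Equiv.swap c d pa := hswap a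
  have hswb : (σseq (m+1))⁻¹ b = Equiv.swap c d pb := hswap b
  have hne1 : (σseq (m+1))⁻¹ a ≠ (σseq (m+1))⁻¹ b := hne (m+1)
  by_cases hA : pa = c ∨ pa = d
  · by_cases hB : pb = c ∨ pb = d
    · -- both objects are at the swapped positions: they cross
      have hpab : pa ≠ pb := hne m
      have hpacd : pa = c ∧ pb = d := by
        rcases hA with h1 | h1 <;> rcases hB with h2 | h2
        · exact absurd (h1.trans h2.symm) hpab
        · exact ⟨h1, h2⟩
        · exfalso; rw [h1, h2] at hPm; omega
        · exact absurd (h1.trans h2.symm) hpab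
      obtain ⟨hpac, hpbd⟩ := hpacd
      have hmva : (((σseq (m+1))⁻¹) a).val = (((σseq m)⁻¹) a).val + 1 := by
        rw [hswa, hpac, Equiv.swap_apply_left, ← hpa, hpac]; omega
      have hmvb : (((σseq (m+1))⁻¹) b).val + 1 = (((σseq m)⁻¹) b).val := by
        rw [hswb, hpbd, Equiv.swap_apply_right, ← hpb, hpbd]; omega
      rcases h with hL | hR
      · obtain ⟨h1, h2⟩ := right_move hu hseq hmt hmva
        rw [h0a] at h1
        omega
      · obtain ⟨h1, h2⟩ := left_move hu hseq hmt hmvb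
        rw [h0b] at h1
        omega
    · -- only o_a moves
      push_neg at hB
      have hbfix : (σseq (m+1))⁻¹ b = pb := by
        rw [hswb, Equiv.swap_apply_of_ne_of_ne hB.1 hB.2]
      have hb := swap_val_bound (p := pa) hcd
      rw [← hswa] at hb
      have hnev : (((σseq (m+1))⁻¹) a).val ≠ (((σseq (m+1))⁻¹) b).val :=
        fun hv => hne1 (Fin.ext hv)
      rw [hbfix] at hnev
      -- pa' ≤ pa + 1 ≤ pb, and pa' ≠ pb, so pa' < pb
      apply hPm1
      rw [hbfix]
      omega
  · push_neg at hA
    have hafix : (σseq (m+1))⁻¹ a = pa := by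
      rw [hswa, Equiv.swap_apply_of_ne_of_ne hA.1 hA.2]
    by_cases hB : pb = c ∨ pb = d
    · -- only o_b moves
      have hb := swap_val_bound (p := pb) hcd
      rw [← hswb] at hb
      have hnev : (((σseq (m+1))⁻¹) a).val ≠ (((σseq (m+1))⁻¹) b).val :=
        fun hv => hne1 (Fin.ext hv)
      rw [hafix] at hnev
      apply hPm1
      rw [hafix]
      omega
    · -- neither moves
      push_neg at hB
      have hbfix : (σseq (m+1))⁻¹ b = pb := by
        rw [hswb, Equiv.swap_apply_of_ne_of_ne hB.1 hB.2]
      apply hPm1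
      rw [hafix, hbfix]
      exact hPm
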